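/- Every nonzero continuous linear functional μ̃ on the locally convex cone (P,V) restricts to a continuous linear functional on some Q_i and equals +∞ outside Q_i: if μ̃ ∈ P* is nonzero, then there exists i ∈ ℕ such that μ̃(x) = +∞ for all x ∉ Q_i, and the restriction of μ̃ to Q_i lies in Q_i*. -/

import Mathlib

open scoped NNReal ENNReal

/-- The positive reals, used for the values `a` in elements `a_i`. -/
abbrev Rpos := {a : ℝ // 0 < a}

/-- The cone `P = {a_i : a ∈ (0,∞), i ∈ ℕ} ∪ {0₀, ∞_∞}`. -/
inductive CP : Type where
  | zero : CP
  | inf : CP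
  | elt : Rpos → ℕ+ → CP

namespace CP

/-- Addition on `P`. -/
def add : CP → CP → CP
  | zero, x => x
  | x, zero => x
  | inf, _ => inf
  | _, inf => inf
  | elt a i, elt b j =>
      if i = j then elt ⟨a.1 + b.1, add_pos a.2 b.2⟩ i else inf

/-- Scalar multiplication by nonnegative reals on `P`. -/
noncomputable def smul (r : ℝ≥0) (x : CP) : CP :=
  if h : r = 0 then zero
  else
    match x with
    | zero => zero
    | inf => inf
    | elt a i => elt ⟨(r : ℝ) * a.1,
        mul_pos (by exact_mod_cast pos_iff_ne_zero.mpr h) a.2⟩ i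

/-- The preorder on `P`: `a_i ⪯ b_j` iff `i = j` and `a ≤ b`. -/
def le : CP → CP → Prop
  | zero, zero => True
  | inf, inf => True
  | elt a i, elt b j => i = j ∧ a.1 ≤ b.1
  | _, _ => False

/-- The neighborhood relation: `nrel v x y` means `x ⪯ y + v`. -/
def nrel (v : ℝ) : CP → CP → Prop
  | zero, _ => True
  | _, inf => True
  | elt a i, elt b j => i = j ∧ a.1 ≤ b.1 + (i : ℝ) * v
  | _, _ => False

/-- The subcone `Q_j = {b_j : b ∈ (0,∞)} ∪ {0₀, ∞_∞}`. -/
def Q (j : ℕ+) : Set CP := {x | x = zero ∨ x = inf ∨ ∃ a : Rpos, x = elt a j}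

/-- Symmetric neighborhood of `b` relative to the subcone `Qs`. -/
def symN (Qs : Set CP) (v : ℝ) (b : CP) : Set CP :=
  {a ∈ Qs | nrel v a b ∧ nrel v b a}

/-- Linearity of a functional `μ : P → ℝ ∪ {+∞}` relative to a subcone. -/
def IsLinearOn (Qs : Set CP) (μ : CP → EReal) : Prop :=
  μ zero = 0 ∧ (∀ x, μ x ≠ ⊥) ∧
  (∀ x ∈ Qs, ∀ y ∈ Qs, μ (add x y) = μ x + μ y) ∧
  (∀ r : ℝ≥0, ∀ x ∈ Qs, μ (smul r x) = ((r : ℝ) : EReal) * μ x)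

/-- (Uniform) continuity of a functional relative to a subcone. -/
def IsContOn (Qs : Set CP) (μ : CP → EReal) : Prop :=
  ∃ v : ℝ, 0 < v ∧ ∀ x ∈ Qs, ∀ y ∈ Qs, nrel v x y → μ x ≤ μ y + 1

/-- Membership in the dual cone of the subcone `Qs`. -/
def InDualOn (Qs : Set CP) (μ : CP → EReal) : Prop :=
  IsLinearOn Qs μ ∧ IsContOn Qs μ

/-- `λ B = {(λx, λy) : (x,y) ∈ B}`. -/
def scaleSet (l : ℝ≥0) (B : Set (CP × CP)) : Set (CP × CP) :=
  (fun p => (smul l p.1, smul l p.2)) '' B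

/-- `B` is a barrel in the subcone `Qs`. -/
def IsBarrelOn (Qs : Set CP) (B : Set (CP × CP)) : Prop :=
  (∀ p ∈ B, p.1 ∈ Qs ∧ p.2 ∈ Qs) ∧
  (∀ p ∈ B, ∀ q ∈ B, ∀ t : ℝ≥0, t ≤ 1 →
     (add (smul t p.1) (smul (1 - t) q.1),
      add (smul t p.2) (smul (1 - t) q.2)) ∈ B) ∧
  (∀ b ∈ Qs, ∃ v : ℝ, 0 < v ∧ ∀ a ∈ symN Qs v b,
     ∃ l : ℝ≥0, 0 < l ∧ (a, b) ∈ scaleSet l B) ∧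
  (∀ a ∈ Qs, ∀ b ∈ Qs, (a, b) ∉ B → ∃ μ : CP → EReal, InDualOn Qs μ ∧
     μ b + 1 < μ a ∧ ∀ p ∈ B, μ p.1 ≤ μ p.2 + 1)

/-- The subcone `Qs` is barreled. -/
def BarreledOn (Qs : Set CP) : Prop :=
  ∀ B, IsBarrelOn Qs B → ∀ b ∈ Qs, ∃ v : ℝ, 0 < v ∧ ∃ l : ℝ≥0, 0 < l ∧
    ∀ a ∈ symN Qs v b, (a, b) ∈ scaleSet l B

/-- The subcone `Qs` is upper-barreled. -/
def UpperBarreledOn (Qs : Set CP) : Prop :=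
  ∀ B, IsBarrelOn Qs B → ∃ v : ℝ, 0 < v ∧
    ∀ p : CP × CP, p.1 ∈ Qs → p.2 ∈ Qs → nrel v p.1 p.2 → p ∈ B

/-- The functional `∞̄` (resp. its extension `∞̄~`). -/
noncomputable def fnBarInf : CP → EReal
  | zero => 0
  | _ => ⊤

/-- The functional `0̄_k` (resp. its extension). -/
noncomputable def fnBarZero (k : ℕ+) : CP → EReal
  | zero => 0
  | inf => ⊤
  | elt _ i => if i = k then 0 else ⊤

/-- The functional `c_k : a_k ↦ c·a` (extended by `+∞` off `Q_k`). -/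
noncomputable def fnLam (c : ℝ) (k : ℕ+) : CP → EReal
  | zero => 0
  | inf => ⊤
  | elt a i => if i = k then ((c * a.1 : ℝ) : EReal) else ⊤

/-- The zero functional. -/
noncomputable def fnZero : CP → EReal := fun _ => 0

/-- The barrel `B_j = {(x,y) ∈ Q_j² : x ⪯ y + w/j}`. -/
def Bset (w : ℝ) (j : ℕ+) : Set (CP × CP) :=
  {p | p.1 ∈ Q j ∧ p.2 ∈ Q j ∧ nrel (w / (j : ℝ)) p.1 p.2}

/-- The barrel `B = ⋃_j B_j`. -/
def BigB (w : ℝ) : Set (CP × CP) := ⋃ (j : ℕ+), Bset w j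

/-- The map `Λ : Q_j → [0,∞]`, `a_j ↦ a/j`. -/
noncomputable def Lam (j : ℕ+) : CP → ℝ≥0∞
  | zero => 0
  | inf => ⊤
  | elt a _ => ENNReal.ofReal (a.1 / (j : ℝ))


/-- every nonzero continuous linear functional on `(P, V)` is
`+∞` outside some `Q_i` and restricts to an element of `Q_i*`. -/
theorem stmt10 (μ : CP → EReal) (h : InDualOn Set.univ μ)
    (hne : ∃ x : CP, μ x ≠ 0) :
    ∃ i : ℕ+, (∀ x ∉ Q i, μ x = ⊤) ∧ InDualOn (Q i) μ := by
  obtain ⟨⟨h0, hbot, hadd, hsmul⟩, v, hv, hc⟩ := h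
  have hdual : ∀ i : ℕ+, InDualOn (Q i) μ := fun i =>
    ⟨⟨h0, hbot, fun x _ y _ => hadd x trivial y trivial,
      fun r x _ => hsmul r x trivial⟩, v, hv,
      fun x _ y _ hxy => hc x trivial y trivial hxy⟩
  have haddinf : ∀ x : CP, add x inf = inf := by
    intro x; cases x <;> rfl
  have hinf : μ inf = ⊤ := by
    by_contra htop
    have heq : μ inf = μ inf + μ inf := by
      have := hadd inf trivial inf trivial
      rw [haddinf inf] at this
      exact this
    have hcoe : ((μ inf).toReal : EReal) = μ inf := EReal.coe_toReal htop (hbot inf)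
    set r := (μ inf).toReal with hr
    have hr0 : r = 0 := by
      have : (r : EReal) = (r : EReal) + (r : EReal) := by
        rw [hcoe]; exact heq
      rw [← EReal.coe_add] at this
      have hre : r = r + r := by exact_mod_cast this
      linarith
    have hzero : ∀ x : CP, μ x = 0 := by
      intro x
      have := hadd x trivial inf trivial
      rw [haddinf x] at this
      rw [← hcoe, hr0] at this
      simp at this
      exact this.symm
    obtain ⟨x, hx⟩ := hne
    exact hx (hzero x)
  by_cases hfin : ∃ i a, μ (elt a i) ≠ ⊤
  · obtain ⟨i, a, ha⟩ := hfin
    refine ⟨i, ?_, hdual i⟩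
    intro x hx
    cases x with
    | zero => exact absurd (Or.inl rfl) hx
    | inf => exact absurd (Or.inr (Or.inl rfl)) hx
    | elt b j =>
      have hj : j ≠ i := fun hji => hx (Or.inr (Or.inr ⟨b, by rw [hji]⟩))
      have hij : i ≠ j := fun hij => hj hij.symm
      have haddij : add (elt a i) (elt b j) = inf := by
        simp [add, hij]
      have htop : μ (elt a i) + μ (elt b j) = ⊤ := by
        rw [← hadd (elt a i) trivial (elt b j) trivial, haddij, hinf]
      by_contra hbj
      have hcoe1 : ((μ (elt a i)).toReal : EReal) = μ (elt a i) :=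
        EReal.coe_toReal ha (hbot _)
      have hcoe2 : ((μ (elt b j)).toReal : EReal) = μ (elt b j) :=
        EReal.coe_toReal hbj (hbot _)
      rw [← hcoe1, ← hcoe2, ← EReal.coe_add] at htop
      exact EReal.coe_ne_top _ htop
  · push_neg at hfin
    refine ⟨1, ?_, hdual 1⟩
    intro x hx
    cases x with
    | zero => exact absurd (Or.inl rfl) hx
    | inf => exact absurd (Or.inr (Or.inl rfl)) hx
    | elt b j => exact hfin j b

end CP
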